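/- For every natural number n ≥ 2, with S = {0, 1, 2, …, n}, one has z_S ≤ (3/4)·log₂(n), where log₂ denotes the base-2 logarithm. -/

import Mathlib

open Real Finset

/-- `g_S(t) = ∑_{e ∈ S} t^(2e)`. -/
noncomputable def gS (S : Finset ℕ) (t : ℝ) : ℝ := ∑ e ∈ S, t ^ (2 * e)

/-- `h_S(t) = ∑_{e ∈ S} e² t^(2e-2)` (the term for `e = 0` being `0`). -/
noncomputable def hS (S : Finset ℕ) (t : ℝ) : ℝ := ∑ e ∈ S, (e : ℝ) ^ 2 * t ^ (2 * e - 2)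

/-- `q_S(t) = ∑_{e ∈ S} e t^(2e-1)` (the term for `e = 0` being `0`). -/
noncomputable def qS (S : Finset ℕ) (t : ℝ) : ℝ := ∑ e ∈ S, (e : ℝ) * t ^ (2 * e - 1)

/-- `E_S(t) = g_S(t) h_S(t) - q_S(t)²`. -/
noncomputable def ES (S : Finset ℕ) (t : ℝ) : ℝ := gS S t * hS S t - qS S t ^ 2

/-- The expected number of real zeros in `(0,1)`, given by the Edelman–Kostlan integral. -/
noncomputable def zS (S : Finset ℕ) : ℝ :=
  (1 / Real.pi) * ∫ t in (0 : ℝ)..1, Real.sqrt (ES S t) / gS S t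

lemma sumA (u : ℝ) (n : ℕ) : (1-u) * ∑ e ∈ range (n+1), u^e = 1 - u^(n+1) := by
  have := geom_sum_mul u (n+1)
  linear_combination -this

lemma sumB (u : ℝ) (n : ℕ) :
    (1-u)^2 * ∑ e ∈ range (n+1), (e:ℝ) * u^(e-1)
      = 1 - ((n:ℝ)+1)*u^n + (n:ℝ)*u^(n+1) := by
  induction n with
  | zero => simp
  | succ m ih =>
    rw [sum_range_succ]
    have h1 : (m+1) - 1 = m := rfl
    rw [h1]
    push_cast
    linear_combination ih

lemma sumC (u : ℝ) (n : ℕ) :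
    (1-u)^3 * ∑ e ∈ range (n+1), (e:ℝ)^2 * u^(e-1)
      = 1 + u - ((n:ℝ)+1)^2*u^n + (2*(n:ℝ)^2+2*(n:ℝ)-1)*u^(n+1) - (n:ℝ)^2*u^(n+2) := by
  induction n with
  | zero => push_cast; ring_nf; simp
  | succ m ih =>
    rw [sum_range_succ]
    have h1 : (m+1) - 1 = m := rfl
    rw [h1]
    push_cast
    linear_combination ih

lemma gS_eq (n : ℕ) (t : ℝ) : gS (range (n+1)) t = ∑ e ∈ range (n+1), (t^2)^e := by
  unfold gS
  refine Finset.sum_congr rfl fun e _ => ?_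
  rw [pow_mul]

lemma hS_eq (n : ℕ) (t : ℝ) :
    hS (range (n+1)) t = ∑ e ∈ range (n+1), (e:ℝ)^2 * (t^2)^(e-1) := by
  unfold hS
  refine Finset.sum_congr rfl fun e _ => ?_
  rcases Nat.eq_zero_or_pos e with he | he
  · subst he; simp
  · have h2 : 2 * e - 2 = 2 * (e - 1) := by omega
    rw [h2, pow_mul]

lemma qS_eq (n : ℕ) (t : ℝ) :
    qS (range (n+1)) t = t * ∑ e ∈ range (n+1), (e:ℝ) * (t^2)^(e-1) := by
  unfold qS
  rw [Finset.mul_sum]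
  refine Finset.sum_congr rfl fun e _ => ?_
  rcases Nat.eq_zero_or_pos e with he | he
  · subst he; simp
  · have h2 : 2 * e - 1 = 2 * (e - 1) + 1 := by omega
    rw [h2, pow_add, pow_mul]
    ring

lemma keyES (n : ℕ) (t : ℝ) :
    (1-t^2)^4 * ES (range (n+1)) t
      = (1 - (t^2)^(n+1))^2 - ((n:ℝ)+1)^2*(t^2)^n*(1-t^2)^2 := by
  have hA := sumA (t^2) n
  have hB := sumB (t^2) n
  have hC := sumC (t^2) n
  unfold ES
  rw [gS_eq, hS_eq, qS_eq]
  set u := t^2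
  set G := ∑ e ∈ range (n+1), u^e with hG
  set S1 := ∑ e ∈ range (n+1), (e:ℝ) * u^(e-1) with hS1
  set S2 := ∑ e ∈ range (n+1), (e:ℝ)^2 * u^(e-1) with hS2
  linear_combination ((1-u)^3*S2) * hA + (1 - u^(n+1)) * hC
    - u*((1-u)^2*S1 + (1 - ((n:ℝ)+1)*u^n + (n:ℝ)*u^(n+1))) * hB

lemma gS_one_le (n : ℕ) (t : ℝ) : 1 ≤ gS (range (n+1)) t := by
  unfold gS
  have h0 : (0:ℕ) ∈ range (n+1) := mem_range.2 (Nat.succ_pos n)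
  have := Finset.single_le_sum (f := fun e => t ^ (2*e))
    (fun e _ => by rw [pow_mul]; positivity) h0
  simpa using this

lemma gS_pos (n : ℕ) (t : ℝ) : 0 < gS (range (n+1)) t :=
  lt_of_lt_of_le one_pos (gS_one_le n t)

lemma hS_le (n : ℕ) (t : ℝ) : hS (range (n+1)) t ≤ (n:ℝ)^2 * gS (range (n+1)) t := by
  unfold hS gS
  rw [Finset.sum_range_succ' (fun e => (e:ℝ)^2 * t^(2*e-2)) n]
  simp only [Nat.cast_zero, ne_eq, OfNat.ofNat_ne_zero, not_false_eq_true, zero_pow,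
    zero_mul, add_zero, Nat.cast_add, Nat.cast_one]
  rw [Finset.mul_sum]
  rw [Finset.sum_range_succ (fun e => (n:ℝ)^2 * t^(2*e))]
  have h1 : ∀ e ∈ range n, ((e:ℝ)+1)^2 * t^(2*(e+1)-2) ≤ (n:ℝ)^2 * t^(2*e) := by
    intro e he
    have h2 : 2*(e+1)-2 = 2*e := by omega
    rw [h2]
    have ht : (0:ℝ) ≤ t^(2*e) := by rw [pow_mul]; positivity
    have hc : ((e:ℝ)+1)^2 ≤ (n:ℝ)^2 := by
      have : (e:ℝ)+1 ≤ n := by exact_mod_cast mem_range.1 he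
      nlinarith [Nat.cast_nonneg (α := ℝ) e]
    nlinarith
  calc ∑ e ∈ range n, ((e:ℝ)+1)^2 * t^(2*(e+1)-2)
      ≤ ∑ e ∈ range n, (n:ℝ)^2 * t^(2*e) := Finset.sum_le_sum h1
    _ ≤ ∑ e ∈ range n, (n:ℝ)^2 * t^(2*e) + (n:ℝ)^2 * t^(2*n) := by
        have : (0:ℝ) ≤ t^(2*n) := by rw [pow_mul]; positivity
        nlinarith

lemma sqrt_ES_le_n (n : ℕ) (t : ℝ) :
    Real.sqrt (ES (range (n+1)) t) ≤ (n:ℝ) * gS (range (n+1)) t := by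
  have hg := gS_pos n t
  have h1 : ES (range (n+1)) t ≤ ((n:ℝ) * gS (range (n+1)) t)^2 := by
    unfold ES
    have h2 := hS_le n t
    have h3 : qS (range (n+1)) t ^ 2 ≥ 0 := sq_nonneg _
    nlinarith
  calc Real.sqrt (ES (range (n+1)) t) ≤ Real.sqrt (((n:ℝ) * gS (range (n+1)) t)^2) :=
        Real.sqrt_le_sqrt h1
    _ = (n:ℝ) * gS (range (n+1)) t := Real.sqrt_sq (by positivity)

lemma sqrt_ES_le_inv (n : ℕ) (t : ℝ) (h0 : 0 ≤ t) (h1 : t < 1) :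
    Real.sqrt (ES (range (n+1)) t) ≤ gS (range (n+1)) t / (1 - t^2) := by
  have hA : 0 < 1 - t^2 := by nlinarith
  have hg := gS_pos n t
  have hkey := keyES n t
  have hle : (1-t^2)^4 * ES (range (n+1)) t ≤ (1 - (t^2)^(n+1))^2 := by
    have : (0:ℝ) ≤ ((n:ℝ)+1)^2*(t^2)^n*(1-t^2)^2 := by positivity
    linarith
  have hGp : 1 - (t^2)^(n+1) = (1-t^2) * gS (range (n+1)) t := by
    rw [gS_eq]; linarith [sumA (t^2) n]
  have h2 : ES (range (n+1)) t ≤ (gS (range (n+1)) t / (1-t^2))^2 := by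
    rw [hGp] at hle
    rw [div_pow, le_div_iff₀ (by positivity)]
    have h3 : (ES (range (n+1)) t * (1-t^2)^2) * (1-t^2)^2
        ≤ gS (range (n+1)) t ^2 * ((1-t^2)^2*(1-t^2)^0) := by
      calc (ES (range (n+1)) t * (1-t^2)^2) * (1-t^2)^2
          = (1-t^2)^4 * ES (range (n+1)) t := by ring
        _ ≤ ((1-t^2) * gS (range (n+1)) t)^2 := hle
        _ = gS (range (n+1)) t ^2 * ((1-t^2)^2*(1-t^2)^0) := by ring
    have h4 := le_of_mul_le_mul_right (by simpa using h3) (show (0:ℝ) < (1-t^2)^2 by positivity)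
    simpa using h4
  calc Real.sqrt (ES (range (n+1)) t) ≤ Real.sqrt ((gS (range (n+1)) t / (1-t^2))^2) :=
        Real.sqrt_le_sqrt h2
    _ = gS (range (n+1)) t / (1-t^2) := Real.sqrt_sq (by positivity)

lemma contES (n : ℕ) : Continuous (fun t => ES (range (n+1)) t) := by
  have hg : Continuous (fun t => gS (range (n+1)) t) := by
    unfold gS; exact continuous_finset_sum _ fun i _ => by fun_prop
  have hh : Continuous (fun t => hS (range (n+1)) t) := by
    unfold hS; exact continuous_finset_sum _ fun i _ => by fun_prop
  have hq : Continuous (fun t => qS (range (n+1)) t) := by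
    unfold qS; exact continuous_finset_sum _ fun i _ => by fun_prop
  unfold ES; fun_prop

lemma contgS (n : ℕ) : Continuous (fun t => gS (range (n+1)) t) := by
  unfold gS; exact continuous_finset_sum _ fun i _ => by fun_prop

lemma contf (n : ℕ) :
    Continuous (fun t => Real.sqrt (ES (range (n+1)) t) / gS (range (n+1)) t) := by
  apply Continuous.div
  · exact Real.continuous_sqrt.comp (contES n)
  · exact contgS n
  · exact fun t => ne_of_gt (gS_pos n t)

theorem stmt16 (n : ℕ) (hn : 2 ≤ n) :
    zS (Finset.range (n + 1)) ≤ (3 / 4) * Real.logb 2 n := by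
  have hn1 : (1:ℝ) ≤ (n:ℝ) := by exact_mod_cast Nat.one_le_of_lt hn
  have hn0 : (0:ℝ) < (n:ℝ) := by linarith
  set a : ℝ := 1 - 1/(n:ℝ) with ha_def
  have hinv : 0 < 1/(n:ℝ) := by positivity
  have hinv1 : 1/(n:ℝ) ≤ 1 := by
    rw [div_le_one hn0]; linarith
  have ha0 : 0 ≤ a := by simp only [ha_def]; linarith
  have ha1 : a ≤ 1 := by simp only [ha_def]; linarith
  set f : ℝ → ℝ := fun t => Real.sqrt (ES (range (n+1)) t) / gS (range (n+1)) t with hf_def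
  have hfc : Continuous f := contf n
  have hI1 : IntervalIntegrable f MeasureTheory.volume 0 a := hfc.intervalIntegrable 0 a
  have hI2 : IntervalIntegrable f MeasureTheory.volume a 1 := hfc.intervalIntegrable a 1
  -- bound on [0,a]
  have hinvint : IntervalIntegrable (fun t => (1-t)⁻¹) MeasureTheory.volume 0 a := by
    apply ContinuousOn.intervalIntegrable
    apply ContinuousOn.inv₀ (by fun_prop)
    intro x hx
    rw [Set.uIcc_of_le ha0] at hx
    have hxa : x ≤ a := hx.2
    have : 1 - x ≥ 1/(n:ℝ) := by simp only [ha_def] at hxa; linarith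
    exact ne_of_gt (by linarith)
  have hbound1 : ∀ x ∈ Set.Icc (0:ℝ) a, f x ≤ (1-x)⁻¹ := by
    intro x hx
    have hx0 : 0 ≤ x := hx.1
    have hxa : x ≤ a := hx.2
    have hx1 : x < 1 := lt_of_le_of_lt hxa (by simp only [ha_def]; linarith)
    have hg := gS_pos n x
    have hA2 : 0 < 1 - x^2 := by nlinarith
    have hA1 : 0 < 1 - x := by linarith
    have h1 : f x ≤ (gS (range (n+1)) x / (1-x^2)) / gS (range (n+1)) x := by
      apply div_le_div_of_nonneg_right (sqrt_ES_le_inv n x hx0 hx1) hg.le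
    have h2 : (gS (range (n+1)) x / (1-x^2)) / gS (range (n+1)) x = (1-x^2)⁻¹ := by
      field_simp
    rw [h2] at h1
    refine le_trans h1 ?_
    apply inv_anti₀ hA1
    nlinarith
  have hint1 : (∫ t in (0:ℝ)..a, f t) ≤ ∫ t in (0:ℝ)..a, (1-t)⁻¹ :=
    intervalIntegral.integral_mono_on ha0 hI1 hinvint hbound1
  have hval1 : (∫ t in (0:ℝ)..a, (1-t)⁻¹) = Real.log n := by
    have hc := intervalIntegral.integral_comp_sub_left (a := 0) (b := a)
      (fun s => s⁻¹) 1
    rw [hc]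
    have h1a : 1 - a = 1/(n:ℝ) := by simp [ha_def]
    rw [h1a, sub_zero]
    rw [integral_inv]
    · rw [one_div_one_div]
    · intro hmem
      rw [Set.uIcc_of_le (by linarith : 1/(n:ℝ) ≤ 1)] at hmem
      linarith [hmem.1]
  -- bound on [a,1]
  have hbound2 : ∀ x ∈ Set.Icc a (1:ℝ), f x ≤ (n:ℝ) := by
    intro x hx
    have hg := gS_pos n x
    rw [hf_def]
    simp only
    rw [div_le_iff₀ hg]
    exact sqrt_ES_le_n n x
  have hconstint : IntervalIntegrable (fun _ : ℝ => (n:ℝ)) MeasureTheory.volume a 1 :=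
    intervalIntegrable_const
  have hint2 : (∫ t in a..(1:ℝ), f t) ≤ ∫ t in a..(1:ℝ), (n:ℝ) :=
    intervalIntegral.integral_mono_on ha1 hI2 hconstint hbound2
  have hval2 : (∫ t in a..(1:ℝ), (n:ℝ)) = 1 := by
    rw [intervalIntegral.integral_const]
    have : (1:ℝ) - a = 1/(n:ℝ) := by simp [ha_def]
    rw [this]
    rw [smul_eq_mul, one_div, inv_mul_cancel₀ hn0.ne']
  have hsplit : (∫ t in (0:ℝ)..1, f t) = (∫ t in (0:ℝ)..a, f t) + ∫ t in a..(1:ℝ), f t :=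
    (intervalIntegral.integral_add_adjacent_intervals hI1 hI2).symm
  have htotal : (∫ t in (0:ℝ)..1, f t) ≤ Real.log n + 1 := by
    rw [hsplit]
    have e1 := hint1.trans_eq hval1
    have e2 := hint2.trans_eq hval2
    linarith
  -- final arithmetic
  have hπ : 0 < Real.pi := Real.pi_pos
  have hz : zS (Finset.range (n+1)) ≤ (1/Real.pi) * (Real.log n + 1) := by
    unfold zS
    apply mul_le_mul_of_nonneg_left htotal (by positivity)
  refine le_trans hz ?_
  set L := Real.log n with hL
  set c := Real.log 2 with hc
  have hc0 : 0 < c := Real.log_pos (by norm_num)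
  have hcL : c ≤ L := by
    rw [hL, hc]
    exact Real.log_le_log (by norm_num) (by exact_mod_cast hn)
  have hL0 : 0 < L := lt_of_lt_of_le hc0 hcL
  have hc9 : c < 0.6931471808 := Real.log_two_lt_d9
  have hπ3 : (3:ℝ) < Real.pi := Real.pi_gt_three
  rw [Real.logb]
  rw [show (1/Real.pi) * (L + 1) = (L+1)/Real.pi by ring]
  rw [show (3:ℝ)/4 * (L/c) = (3*L)/(4*c) by field_simp]
  rw [div_le_div_iff₀ hπ (by positivity)]
  nlinarith [mul_lt_mul_of_pos_right hc9 hL0, mul_lt_mul_of_pos_right hπ3 hL0]
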